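/- Substituting the control law u_pidz = u_pi + u_dz into the fully-actuated mechanical port-Hamiltonian system yields a closed loop that preserves the mechanical port-Hamiltonian structure: for all (q,p), the closed-loop vector field satisfies q̇ = ∇_p H_d(q,p) and ṗ = −∇_q H_d(q,p) − (D(q,p) + K_P) ∇_p H_d(q,p), where H_d(q,p) := ½ pᵀ M(q)⁻¹ p + ½ (q−q⋆)ᵀ K_I (q−q⋆) + Σ_{i=1}^n (k_i/μ_i)·ln(cosh(μ_i (q_i−q⋆_i))). Equivalently: −∇_q H(q,p) − D(q,p) M(q)⁻¹ p + G·u_pidz(q,p) + β = −∇_q H_d(q,p) − (D(q,p) + K_P) M(q)⁻¹ p. -/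

import Mathlib

open Matrix

/-- The `i`-th component of the gradient of a scalar function on `ℝⁿ`. -/
noncomputable def grad {n : ℕ} (f : (Fin n → ℝ) → ℝ) (x : Fin n → ℝ) : Fin n → ℝ :=
  fun i => fderiv ℝ f x (Pi.single i 1)

/-- The desired (shaped) Hamiltonian
`H_d(q,p) = ½ pᵀ M(q)⁻¹ p + ½ (q−q⋆)ᵀ K_I (q−q⋆) + Σᵢ (kᵢ/μᵢ) ln cosh(μᵢ(qᵢ−q⋆ᵢ))`. -/
noncomputable def Hdes {n : ℕ} (M : (Fin n → ℝ) → Matrix (Fin n) (Fin n) ℝ)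
    (KI : Matrix (Fin n) (Fin n) ℝ) (k μ qstar : Fin n → ℝ) (q p : Fin n → ℝ) : ℝ :=
  (1 / 2) * (p ⬝ᵥ ((M q)⁻¹ *ᵥ p)) + (1 / 2) * ((q - qstar) ⬝ᵥ (KI *ᵥ (q - qstar)))
    + ∑ i, (k i / μ i) * Real.log (Real.cosh (μ i * (q i - qstar i)))

section aux
variable {n : ℕ}

lemma grad_fun_add {f g : (Fin n → ℝ) → ℝ} {x : Fin n → ℝ}
    (hf : DifferentiableAt ℝ f x) (hg : DifferentiableAt ℝ g x) :
    grad (fun y => f y + g y) x = grad f x + grad g x := by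
  funext m
  simp [grad, fderiv_fun_add hf hg]

lemma grad_add_const {f : (Fin n → ℝ) → ℝ} {x : Fin n → ℝ} (c : ℝ) :
    grad (fun y => f y + c) x = grad f x := by
  funext m; simp [grad, fderiv_add_const]

lemma grad_const_mul {f : (Fin n → ℝ) → ℝ} {x : Fin n → ℝ}
    (hf : DifferentiableAt ℝ f x) (c : ℝ) :
    grad (fun y => c * f y) x = c • grad f x := by
  funext m; simp [grad, fderiv_const_mul hf]

lemma hasFDerivAt_quadForm (A : Matrix (Fin n) (Fin n) ℝ) (c x : Fin n → ℝ) :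
    HasFDerivAt (fun y : Fin n → ℝ => (y - c) ⬝ᵥ (A *ᵥ (y - c)))
      (∑ i, ((x i - c i) • (∑ j, A i j • (ContinuousLinearMap.proj j : (Fin n → ℝ) →L[ℝ] ℝ))
        + (∑ j, A i j * (x j - c j)) • (ContinuousLinearMap.proj i : (Fin n → ℝ) →L[ℝ] ℝ))) x := by
  have hrw : (fun y : Fin n → ℝ => (y - c) ⬝ᵥ (A *ᵥ (y - c)))
      = fun y => ∑ i, (y i - c i) * (∑ j, A i j * (y j - c j)) := by
    funext y; simp [dotProduct, Matrix.mulVec, Pi.sub_apply]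
  rw [hrw]
  apply HasFDerivAt.fun_sum
  intro i _
  have hproj : ∀ j : Fin n, HasFDerivAt (fun y : Fin n → ℝ => y j - c j)
      (ContinuousLinearMap.proj j : (Fin n → ℝ) →L[ℝ] ℝ) x :=
    fun j => ((ContinuousLinearMap.proj j : (Fin n → ℝ) →L[ℝ] ℝ).hasFDerivAt).sub_const _
  have hinner : HasFDerivAt (fun y : Fin n → ℝ => ∑ j, A i j * (y j - c j))
      (∑ j, A i j • (ContinuousLinearMap.proj j : (Fin n → ℝ) →L[ℝ] ℝ)) x := by
    apply HasFDerivAt.fun_sum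
    intro j _
    exact (hproj j).const_mul _
  exact (hproj i).mul hinner

lemma grad_quadForm (A : Matrix (Fin n) (Fin n) ℝ) (c x : Fin n → ℝ) :
    grad (fun y : Fin n → ℝ => (y - c) ⬝ᵥ (A *ᵥ (y - c))) x
      = Aᵀ *ᵥ (x - c) + A *ᵥ (x - c) := by
  funext m
  rw [grad, (hasFDerivAt_quadForm A c x).fderiv]
  simp only [ContinuousLinearMap.coe_sum', Finset.sum_apply, ContinuousLinearMap.add_apply,
    ContinuousLinearMap.coe_smul', Pi.smul_apply, ContinuousLinearMap.proj_apply, smul_eq_mul]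
  rw [Finset.sum_add_distrib]
  have h1 : ∑ i, (x i - c i) * ∑ j, A i j * (Pi.single m 1 : Fin n → ℝ) j
      = (Aᵀ *ᵥ (x - c)) m := by
    simp only [Pi.single_apply, mul_ite, mul_one, mul_zero, Finset.sum_ite_eq',
      Finset.mem_univ, if_true]
    simp only [Matrix.mulVec, dotProduct, Matrix.transpose_apply, Pi.sub_apply]
    exact Finset.sum_congr rfl fun i _ => by ring
  have h2 : ∑ i, (∑ j, A i j * (x j - c j)) * (Pi.single m 1 : Fin n → ℝ) i
      = (A *ᵥ (x - c)) m := by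
    simp only [Pi.single_apply, mul_ite, mul_one, mul_zero, Finset.sum_ite_eq',
      Finset.mem_univ, if_true]
    simp [Matrix.mulVec, dotProduct]
  rw [h1, h2, Pi.add_apply]

lemma hasFDerivAt_logcosh (k μ c : Fin n → ℝ) (hμ : ∀ i, μ i ≠ 0) (x : Fin n → ℝ) :
    HasFDerivAt (fun y : Fin n → ℝ => ∑ i, (k i / μ i) * Real.log (Real.cosh (μ i * (y i - c i))))
      (∑ i, (k i * Real.tanh (μ i * (x i - c i))) • (ContinuousLinearMap.proj i : (Fin n → ℝ) →L[ℝ] ℝ)) x := by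
  apply HasFDerivAt.fun_sum
  intro i _
  have hlin : HasDerivAt (fun t : ℝ => μ i * (t - c i)) (μ i) (x i) := by
    simpa using ((hasDerivAt_id (x i)).sub_const (c i)).const_mul (μ i)
  have hcosh := (Real.hasDerivAt_cosh (μ i * (x i - c i))).comp (x i) hlin
  have hlog := (Real.hasDerivAt_log (Real.cosh_pos (μ i * (x i - c i))).ne').comp (x i) hcosh
  have hmain := hlog.const_mul (k i / μ i)
  have heq : (k i / μ i) * ((Real.cosh (μ i * (x i - c i)))⁻¹ * (Real.sinh (μ i * (x i - c i)) * μ i))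
      = k i * Real.tanh (μ i * (x i - c i)) := by
    set s := μ i * (x i - c i) with hs
    rw [Real.tanh_eq_sinh_div_cosh]
    have hc : Real.cosh s ≠ 0 := (Real.cosh_pos s).ne'
    field_simp [hμ i]
  have hmain' : HasDerivAt (fun t : ℝ => (k i / μ i) * Real.log (Real.cosh (μ i * (t - c i))))
      (k i * Real.tanh (μ i * (x i - c i))) (x i) := by
    rw [← heq]
    exact hmain
  exact hmain'.comp_hasFDerivAt (f := fun y : Fin n → ℝ => y i) x ((ContinuousLinearMap.proj i : (Fin n → ℝ) →L[ℝ] ℝ).hasFDerivAt)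

lemma grad_logcosh (k μ c : Fin n → ℝ) (hμ : ∀ i, μ i ≠ 0) (x : Fin n → ℝ) :
    grad (fun y : Fin n → ℝ => ∑ i, (k i / μ i) * Real.log (Real.cosh (μ i * (y i - c i)))) x
      = fun m => k m * Real.tanh (μ m * (x m - c m)) := by
  funext m
  rw [grad, (hasFDerivAt_logcosh k μ c hμ x).fderiv]
  simp only [ContinuousLinearMap.coe_sum', Finset.sum_apply, ContinuousLinearMap.coe_smul',
    Pi.smul_apply, ContinuousLinearMap.proj_apply, smul_eq_mul, Pi.single_apply,
    mul_ite, mul_one, mul_zero, Finset.sum_ite_eq', Finset.mem_univ, if_true]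

lemma differentiableAt_det (N : (Fin n → ℝ) → Matrix (Fin n) (Fin n) ℝ) (x : Fin n → ℝ)
    (h : ∀ i j, DifferentiableAt ℝ (fun y => N y i j) x) :
    DifferentiableAt ℝ (fun y => (N y).det) x := by
  simp only [Matrix.det_apply']
  apply DifferentiableAt.fun_sum
  intro σ _
  exact DifferentiableAt.const_mul
    ((HasFDerivAt.finset_prod (fun i (_ : i ∈ Finset.univ) => (h (σ i) i).hasFDerivAt)).differentiableAt) _

end aux

lemma differentiableAt_kinq {n : ℕ} (M : (Fin n → ℝ) → Matrix (Fin n) (Fin n) ℝ)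
    (p q : Fin n → ℝ)
    (hM : ∀ i j, DifferentiableAt ℝ (fun y => M y i j) q)
    (hdet : (M q).det ≠ 0) :
    DifferentiableAt ℝ (fun q' => p ⬝ᵥ ((M q')⁻¹ *ᵥ p)) q := by
  have hrw : (fun q' => p ⬝ᵥ ((M q')⁻¹ *ᵥ p))
      = fun q' => ((M q').det)⁻¹ * (p ⬝ᵥ ((M q').adjugate *ᵥ p)) := by
    funext y
    rw [Matrix.inv_def, Ring.inverse_eq_inv', Matrix.smul_mulVec, dotProduct_smul,
      smul_eq_mul]
  have hdetM : DifferentiableAt ℝ (fun q' => (M q').det) q := differentiableAt_det M q hM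
  have hadj : ∀ i j, DifferentiableAt ℝ (fun q' => (M q').adjugate i j) q := by
    intro i j
    have : (fun q' => (M q').adjugate i j)
        = fun q' => ((M q').updateRow j (Pi.single i 1)).det := by
      funext y; rw [Matrix.adjugate_apply]
    rw [this]
    apply differentiableAt_det
    intro a b
    by_cases haj : a = j
    · simp [Matrix.updateRow_apply, haj]
    · simp only [Matrix.updateRow_apply, haj, if_false]
      exact hM a b
  rw [hrw]
  apply (hdetM.inv hdet).mul
  have : (fun q' => p ⬝ᵥ ((M q').adjugate *ᵥ p))
      = fun q' => ∑ i, p i * ∑ j, (M q').adjugate i j * p j := by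
    funext y; simp [dotProduct, Matrix.mulVec]
  rw [this]
  exact DifferentiableAt.fun_sum fun i _ =>
    (DifferentiableAt.fun_sum fun j _ => (hadj i j).mul_const _).const_mul _

/-- substituting `u_pidz = u_pi + u_dz` into the fully-actuated mechanical
port-Hamiltonian system yields the closed-loop port-Hamiltonian form with Hamiltonian `H_d`:
`q̇ = ∇_p H_d` and `ṗ = −∇_q H_d − (D + K_P) ∇_p H_d`, i.e.
`−∇_q H − D M⁻¹ p + G u_pidz + β = −∇_q H_d − (D + K_P) M⁻¹ p`. -/
theorem deadzone_closed_loop_pH_structure {n : ℕ} (hn : 1 ≤ n)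
    (qstar β : Fin n → ℝ)
    (M : (Fin n → ℝ) → Matrix (Fin n) (Fin n) ℝ)
    (hM : ∀ i j, ContDiff ℝ 2 (fun q => M q i j))
    (hMpd : ∀ q, (M q).PosDef)
    (U : (Fin n → ℝ) → ℝ) (hU : ContDiff ℝ 1 U)
    (D : (Fin n → ℝ) → (Fin n → ℝ) → Matrix (Fin n) (Fin n) ℝ)
    (hD : ∀ q p, (D q p).PosSemidef)
    (g : Fin n → ℝ) (hg : ∀ i, g i ≠ 0)
    (G : Matrix (Fin n) (Fin n) ℝ) (hG : G = Matrix.diagonal g)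
    (KP KI : Matrix (Fin n) (Fin n) ℝ) (hKP : KP.PosDef) (hKI : KI.PosDef)
    (k μ : Fin n → ℝ) (hk : ∀ i, 0 < k i) (hμ : ∀ i, 0 < μ i)
    (KZ : Matrix (Fin n) (Fin n) ℝ) (hKZ : KZ = Matrix.diagonal k)
    -- the open-loop Hamiltonian H(q,p) = ½ pᵀ M(q)⁻¹ p + U(q)
    (H : (Fin n → ℝ) → (Fin n → ℝ) → ℝ)
    (hH : H = fun q p => (1 / 2) * (p ⬝ᵥ ((M q)⁻¹ *ᵥ p)) + U q)
    -- the PI-PBC part u_pi = −G⁻¹(K_P M(q)⁻¹ p + K_I (q−q⋆) − ∇U(q))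
    (upi : (Fin n → ℝ) → (Fin n → ℝ) → Fin n → ℝ)
    (hupi : upi = fun q p =>
      -(G⁻¹ *ᵥ (KP *ᵥ ((M q)⁻¹ *ᵥ p) + KI *ᵥ (q - qstar) - grad U q)))
    -- the dead-zone compensation part u_dz = −G⁻¹(K_Z Σᵢ eᵢ tanh(μᵢ(qᵢ−q⋆ᵢ)) + β)
    (udz : (Fin n → ℝ) → Fin n → ℝ)
    (hudz : udz = fun q =>
      -(G⁻¹ *ᵥ (KZ *ᵥ (∑ i, Real.tanh (μ i * (q i - qstar i)) • (Pi.single i 1 : Fin n → ℝ)) + β)))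
    (upidz : (Fin n → ℝ) → (Fin n → ℝ) → Fin n → ℝ)
    (hupidz : upidz = fun q p => upi q p + udz q) :
    (∀ q p : Fin n → ℝ,
      grad (fun p' => Hdes M KI k μ qstar q p') p = (M q)⁻¹ *ᵥ p) ∧
    (∀ q p : Fin n → ℝ,
      -(grad (fun q' => H q' p) q) - (D q p) *ᵥ ((M q)⁻¹ *ᵥ p) + G *ᵥ (upidz q p) + β
        = -(grad (fun q' => Hdes M KI k μ qstar q' p) q)
          - (D q p + KP) *ᵥ ((M q)⁻¹ *ᵥ p)) := by
  subst hupidz hupi hudz hH hG hKZ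
  have hμ' : ∀ i, μ i ≠ 0 := fun i => (hμ i).ne'
  -- symmetry of (M q)⁻¹
  have hMsymm : ∀ q, (M q)ᵀ = M q := by
    intro q
    have h := (hMpd q).1
    ext i j
    have := congrFun (congrFun h i) j
    simpa [Matrix.conjTranspose_apply] using this
  have hAsymm : ∀ q, ((M q)⁻¹)ᵀ = (M q)⁻¹ := by
    intro q
    rw [Matrix.transpose_nonsing_inv, hMsymm q]
  have hKIsymm : KIᵀ = KI := by
    have h := hKI.1
    ext i j
    have := congrFun (congrFun h i) j
    simpa [Matrix.conjTranspose_apply] using this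
  constructor
  · intro q p
    have hfun : (fun p' => Hdes M KI k μ qstar q p')
        = fun p' => (1 / 2 : ℝ) * ((p' - 0) ⬝ᵥ ((M q)⁻¹ *ᵥ (p' - 0)))
            + ((1 / 2) * ((q - qstar) ⬝ᵥ (KI *ᵥ (q - qstar)))
              + ∑ i, (k i / μ i) * Real.log (Real.cosh (μ i * (q i - qstar i)))) := by
      funext p'
      simp only [Hdes, sub_zero]
      ring
    rw [hfun, grad_add_const,
      grad_const_mul (hasFDerivAt_quadForm (M q)⁻¹ 0 p).differentiableAt,
      grad_quadForm, hAsymm q]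
    funext m
    simp only [sub_zero, Pi.smul_apply, Pi.add_apply, smul_eq_mul]
    ring
  · intro q p
    have hMd : ∀ i j, DifferentiableAt ℝ (fun y => M y i j) q :=
      fun i j => ((hM i j).differentiable (by norm_num)).differentiableAt
    have hkin : DifferentiableAt ℝ (fun q' => p ⬝ᵥ ((M q')⁻¹ *ᵥ p)) q :=
      differentiableAt_kinq M p q hMd (hMpd q).det_pos.ne'
    have hkin2 : DifferentiableAt ℝ (fun q' => (1 / 2 : ℝ) * (p ⬝ᵥ ((M q')⁻¹ *ᵥ p))) q :=
      hkin.const_mul _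
    have hUq : DifferentiableAt ℝ U q := (hU.differentiable (by norm_num)).differentiableAt
    -- gradient of H in q
    have hgradH : grad (fun q' => (1 / 2 : ℝ) * (p ⬝ᵥ ((M q')⁻¹ *ᵥ p)) + U q') q
        = grad (fun q' => (1 / 2 : ℝ) * (p ⬝ᵥ ((M q')⁻¹ *ᵥ p))) q + grad U q :=
      grad_fun_add hkin2 hUq
    -- gradient of Hdes in q
    have hQd : DifferentiableAt ℝ
        (fun q' => (1 / 2 : ℝ) * ((q' - qstar) ⬝ᵥ (KI *ᵥ (q' - qstar)))) q :=
      (hasFDerivAt_quadForm KI qstar q).differentiableAt.const_mul _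
    have hLd : DifferentiableAt ℝ
        (fun q' => ∑ i, (k i / μ i) * Real.log (Real.cosh (μ i * (q' i - qstar i)))) q :=
      (hasFDerivAt_logcosh k μ qstar hμ' q).differentiableAt
    have hfun : (fun q' => Hdes M KI k μ qstar q' p)
        = fun q' => (1 / 2 : ℝ) * (p ⬝ᵥ ((M q')⁻¹ *ᵥ p))
            + ((1 / 2 : ℝ) * ((q' - qstar) ⬝ᵥ (KI *ᵥ (q' - qstar)))
              + ∑ i, (k i / μ i) * Real.log (Real.cosh (μ i * (q' i - qstar i)))) := by
      funext q'
      simp only [Hdes]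
      ring
    have hgradHd : grad (fun q' => Hdes M KI k μ qstar q' p) q
        = grad (fun q' => (1 / 2 : ℝ) * (p ⬝ᵥ ((M q')⁻¹ *ᵥ p))) q
          + (KI *ᵥ (q - qstar) + fun m => k m * Real.tanh (μ m * (q m - qstar m))) := by
      rw [hfun, grad_fun_add hkin2 (hQd.fun_add hLd), grad_fun_add hQd hLd,
        grad_const_mul (hasFDerivAt_quadForm KI qstar q).differentiableAt,
        grad_quadForm, hKIsymm, grad_logcosh k μ qstar hμ' q]
      congr 1
      funext m
      simp only [Pi.add_apply, Pi.smul_apply, smul_eq_mul]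
      ring
    -- invertibility of G
    have hGdet : IsUnit (Matrix.diagonal g).det := by
      rw [Matrix.det_diagonal]
      exact (Finset.prod_ne_zero_iff.mpr fun i _ => hg i).isUnit
    have hGcancel : ∀ w : Fin n → ℝ,
        Matrix.diagonal g *ᵥ ((Matrix.diagonal g)⁻¹ *ᵥ w) = w := by
      intro w
      rw [Matrix.mulVec_mulVec, Matrix.mul_nonsing_inv _ hGdet, Matrix.one_mulVec]
    have hS : (Matrix.diagonal k) *ᵥ
        (∑ i, Real.tanh (μ i * (q i - qstar i)) • (Pi.single i 1 : Fin n → ℝ))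
        = fun m => k m * Real.tanh (μ m * (q m - qstar m)) := by
      funext m
      simp [Matrix.mulVec_diagonal, Finset.sum_apply, Pi.smul_apply, Pi.single_apply,
        mul_ite, Finset.sum_ite_eq]
    simp only [hgradH, hgradHd]
    rw [Matrix.mulVec_add, Matrix.mulVec_neg, Matrix.mulVec_neg, hGcancel, hGcancel, hS]
    funext m
    simp only [Pi.add_apply, Pi.sub_apply, Pi.neg_apply, Matrix.add_mulVec]
    ring
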